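/- Let B be an n×K̄ complex matrix with full column rank K̄ ≥ 1 and let V be a K̄×m complex matrix. Set T = B B^H, Z = B V, and X₀ = V^H V. Then: (i) the block matrix [[X₀, Z^H], [Z, T]] is positive semidefinite and has rank exactly K̄; and (ii) for every m×m Hermitian matrix X such that [[X, Z^H], [Z, T]] is positive semidefinite, one has tr(X) ≥ tr(X₀) = tr(V^H V). (Rank-constraint equivalence between problems (20) and (21) in Section III-C.) -/

import Mathlib

open Matrix
open scoped ComplexOrder

lemma psd_trace_re_nonneg {k : ℕ} {A : Matrix (Fin k) (Fin k) ℂ} (hA : A.PosSemidef) :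
    0 ≤ A.trace.re := by
  have h : ∀ i, 0 ≤ (A i i).re := by
    intro i
    have h0 := (posSemidef_iff_dotProduct_mulVec.mp hA).2 (Pi.single i 1)
    have e : star (Pi.single i 1 : Fin k → ℂ) ⬝ᵥ A *ᵥ Pi.single i 1 = A i i := by
      simp [dotProduct, Matrix.mulVec_single, Pi.single_apply, apply_ite, Finset.sum_ite_eq']
    rw [e] at h0
    exact (Complex.le_def.mp h0).1
  simp only [Matrix.trace, Matrix.diag, Complex.re_sum]
  exact Finset.sum_nonneg fun i _ => h i

/-- Let `B` be `n × K̄` with full column rank `K̄ ≥ 1`, `V` a `K̄ × m` matrix, and set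
`T = B Bᴴ`, `Z = B V`, `X₀ = Vᴴ V`. Then the block matrix `[[X₀, Zᴴ], [Z, T]]` is positive
semidefinite of rank exactly `K̄`, and every Hermitian `X` making `[[X, Zᴴ], [Z, T]]` positive
semidefinite satisfies `tr X ≥ tr X₀`. -/
theorem stmt5 {n m Kb : ℕ} (hK : 1 ≤ Kb) (B : Matrix (Fin n) (Fin Kb) ℂ) (hB : B.rank = Kb)
    (V : Matrix (Fin Kb) (Fin m) ℂ) :
    (Matrix.fromBlocks (Vᴴ * V) (B * V)ᴴ (B * V) (B * Bᴴ)).PosSemidef ∧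
    (Matrix.fromBlocks (Vᴴ * V) (B * V)ᴴ (B * V) (B * Bᴴ)).rank = Kb ∧
    ∀ X : Matrix (Fin m) (Fin m) ℂ, X.IsHermitian →
      (Matrix.fromBlocks X (B * V)ᴴ (B * V) (B * Bᴴ)).PosSemidef →
      (Vᴴ * V).trace.re ≤ X.trace.re := by
  -- The block matrix is Uᴴ U for U = [V  Bᴴ]
  set U : Matrix (Fin Kb) (Fin m ⊕ Fin n) ℂ := fromCols V Bᴴ with hU
  have hUU : Uᴴ * U = Matrix.fromBlocks (Vᴴ * V) (B * V)ᴴ (B * V) (B * Bᴴ) := by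
    rw [hU, conjTranspose_fromCols_eq_fromRows_conjTranspose, fromRows_mul_fromCols,
      conjTranspose_conjTranspose, conjTranspose_mul]
  have hPSD : (Matrix.fromBlocks (Vᴴ * V) (B * V)ᴴ (B * V) (B * Bᴴ)).PosSemidef := by
    rw [← hUU]; exact posSemidef_conjTranspose_mul_self U
  refine ⟨hPSD, ?_, ?_⟩
  · -- rank
    rw [← hUU, Matrix.rank_conjTranspose_mul_self]
    refine le_antisymm (le_trans U.rank_le_card_height (by simp)) ?_
    have hBHU : Bᴴ = U * fromRows (0 : Matrix (Fin m) (Fin n) ℂ) (1 : Matrix (Fin n) (Fin n) ℂ) := by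
      rw [hU, fromCols_mul_fromRows]; simp
    calc Kb = Bᴴ.rank := by rw [Matrix.rank_conjTranspose, hB]
      _ ≤ U.rank := by rw [hBHU]; exact Matrix.rank_mul_le_left _ _
  · -- trace inequality
    intro X _hX hM
    -- BᴴB is invertible
    have hBinj : Function.Injective B.mulVecLin := by
      rw [← LinearMap.ker_eq_bot]
      have hrn := LinearMap.finrank_range_add_finrank_ker B.mulVecLin
      rw [show Module.finrank ℂ (LinearMap.range B.mulVecLin) = Kb from hB] at hrn
      simp only [Module.finrank_fintype_fun_eq_card, Fintype.card_fin] at hrn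
      exact Submodule.finrank_eq_zero.mp (by omega)
    have hunit : IsUnit (Bᴴ * B) := by
      rw [← Matrix.mulVec_injective_iff_isUnit]
      intro x y hxy
      have hx : ∀ z, (Bᴴ * B) *ᵥ z = 0 → z = 0 := by
        intro z hz
        have hz' : B *ᵥ z = 0 := (conjTranspose_mul_self_mulVec_eq_zero B z).mp hz
        have := hBinj (a₁ := z) (a₂ := 0) (by simpa using hz')
        simpa using this
      exact sub_eq_zero.mp (hx (x - y) (by rw [Matrix.mulVec_sub, hxy, sub_self]))
    have hdet : IsUnit (Bᴴ * B).det := (Matrix.isUnit_iff_isUnit_det _).mp hunit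
    set G : Matrix (Fin Kb) (Fin Kb) ℂ := (Bᴴ * B)⁻¹ with hG
    have hGl : (Bᴴ * B) * G = 1 := Matrix.mul_nonsing_inv _ hdet
    have hGr : G * (Bᴴ * B) = 1 := Matrix.nonsing_inv_mul _ hdet
    have hGH : Gᴴ = G := by
      rw [hG, Matrix.conjTranspose_nonsing_inv]
      congr 1
      rw [conjTranspose_mul, conjTranspose_conjTranspose]
    have hcancel : ∀ {p : ℕ} (P : Matrix (Fin Kb) (Fin p) ℂ), G * (Bᴴ * (B * P)) = P := by
      intro p P
      rw [← Matrix.mul_assoc, ← Matrix.mul_assoc, Matrix.mul_assoc G Bᴴ B, hGr, Matrix.one_mul]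
    have hcancel2 : ∀ {p : ℕ} (P : Matrix (Fin Kb) (Fin p) ℂ), Bᴴ * (B * (G * P)) = P := by
      intro p P
      rw [← Matrix.mul_assoc, ← Matrix.mul_assoc, hGl, Matrix.one_mul]
    -- congruence with C = [1; -B G V]
    set W : Matrix (Fin n) (Fin m) ℂ := B * G * V with hW
    set C : Matrix (Fin m ⊕ Fin n) (Fin m) ℂ := fromRows (1 : Matrix (Fin m) (Fin m) ℂ) (-W)
      with hC
    have key : Cᴴ * (Matrix.fromBlocks X (B * V)ᴴ (B * V) (B * Bᴴ)) * C = X - Vᴴ * V := by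
      rw [hC, conjTranspose_fromRows_eq_fromCols_conjTranspose, Matrix.mul_assoc,
        fromBlocks_mul_fromRows, fromCols_mul_fromRows]
      have e1 : (B * V)ᴴ * (-W) = -(Vᴴ * V) := by
        simp only [hW, conjTranspose_mul, Matrix.mul_neg, Matrix.neg_mul, Matrix.mul_assoc]
        rw [hcancel2]
      have e2 : (-W)ᴴ * (B * V) = -(Vᴴ * V) := by
        simp only [hW, conjTranspose_neg, conjTranspose_mul, Matrix.neg_mul, hGH,
          Matrix.mul_assoc]
        rw [hcancel]
      have e3 : (-W)ᴴ * (B * Bᴴ * (-W)) = Vᴴ * V := by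
        simp only [hW, conjTranspose_neg, conjTranspose_mul, Matrix.neg_mul, Matrix.mul_neg,
          neg_neg, hGH, Matrix.mul_assoc]
        rw [hcancel2, hcancel]
      rw [conjTranspose_one, Matrix.one_mul, Matrix.mul_one, Matrix.mul_one, e1,
        Matrix.mul_add, e2, e3]
      abel
    have hpsd2 : (X - Vᴴ * V).PosSemidef := by
      rw [← key]; exact hM.conjTranspose_mul_mul_same C
    have := psd_trace_re_nonneg hpsd2
    rw [Matrix.trace_sub, Complex.sub_re] at this
    linarith
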